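/- If M ∈ U_s(1,1) has nonzero off-diagonal entry, then the two diagonal entries of M are equal, and M is equivalent (under conjugation by diag(u,v) with |u|=|v|=1, together with multiplication by ±1) to M_t = [[cosh t, sinh t],[sinh t, cosh t]] for some t ≥ 0. -/

import Mathlib

open Matrix
theorem selfAdjoint_pseudoUnitary_offdiag_ne_zero (M : Matrix (Fin 2) (Fin 2) ℂ)
    (hM : Mᴴ = M)
    (h : M * !![1, 0; 0, -1] * M = !![1, 0; 0, -1])
    (hoff : M 0 1 ≠ 0) :
    M 0 0 = M 1 1 ∧
    ∃ t : ℝ, 0 ≤ t ∧ ∃ u v ε : ℂ, ‖u‖ = 1 ∧ ‖v‖ = 1 ∧ (ε = 1 ∨ ε = -1) ∧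
      M = ε • ((Matrix.diagonal ![u, v])ᴴ *
        !![(Real.cosh t : ℂ), (Real.sinh t : ℂ); (Real.sinh t : ℂ), (Real.cosh t : ℂ)] *
        Matrix.diagonal ![u, v]) := by
  have hMe : M = !![M 0 0, M 0 1; M 1 0, M 1 1] := by
    ext i j; fin_cases i <;> fin_cases j <;> simp
  rw [hMe] at h
  simp only [Matrix.mul_fin_two] at h
  rw [← Matrix.ext_iff] at h
  simp only [Fin.forall_fin_two] at h
  obtain ⟨⟨e00, e01⟩, -, -⟩ := by simpa using h
  have hc : M 1 0 = starRingEnd ℂ (M 0 1) := by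
    have h10 : Mᴴ 1 0 = M 1 0 := by rw [hM]
    simpa [Matrix.conjTranspose_apply] using h10.symm
  have har : starRingEnd ℂ (M 0 0) = M 0 0 := by
    have h00 : Mᴴ 0 0 = M 0 0 := by rw [hM]
    simpa [Matrix.conjTranspose_apply] using h00
  have had : M 0 0 = M 1 1 := by
    have hz : M 0 1 * (M 0 0 - M 1 1) = 0 := by linear_combination e01
    rcases mul_eq_zero.mp hz with h' | h'
    · exact absurd h' hoff
    · exact sub_eq_zero.mp h'
  refine ⟨had, ?_⟩
  set r : ℝ := (M 0 0).re with hrdef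
  have ha : M 0 0 = (r : ℂ) := (Complex.conj_eq_iff_re.mp har).symm
  set x : ℝ := ‖M 0 1‖ with hxdef
  have hx0 : 0 < x := by simpa [hxdef] using (norm_pos_iff.mpr hoff)
  have hb2 : M 0 1 * M 1 0 = (x : ℂ) ^ 2 := by
    rw [hc, Complex.mul_conj]
    norm_cast
    exact (Complex.sq_norm _).symm
  have hrx : r ^ 2 - x ^ 2 = 1 := by
    have hC : ((r ^ 2 - x ^ 2 : ℝ) : ℂ) = 1 := by
      push_cast
      linear_combination e00 + hb2 - (M 0 0 + (r : ℂ)) * ha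
    exact_mod_cast hC
  refine ⟨Real.arsinh x, Real.arsinh_nonneg_iff.mpr hx0.le, ?_⟩
  set t := Real.arsinh x with htdef
  have hsinh : Real.sinh t = x := Real.sinh_arsinh x
  have hcosh : Real.cosh t = |r| := by
    rw [htdef, Real.cosh_arsinh, show (1:ℝ) + x ^ 2 = r ^ 2 by linarith]
    exact Real.sqrt_sq_eq_abs r
  set ε' : ℝ := if 0 ≤ r then 1 else -1 with hεdef
  have hεr : ε' * |r| = r := by
    rcases le_or_gt 0 r with h' | h'
    · simp [hεdef, h', abs_of_nonneg h']
    · simp [hεdef, not_le.mpr h', abs_of_neg h']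
  have hε2 : ε' * ε' = 1 := by
    rcases le_or_gt 0 r with h' | h'
    · simp [hεdef, h']
    · simp [hεdef, not_le.mpr h']
  have hεnorm : ‖(ε' : ℂ)‖ = 1 := by
    rcases le_or_gt 0 r with h' | h'
    · simp [hεdef, h']
    · simp [hεdef, not_le.mpr h']
  have hxne : (x : ℂ) ≠ 0 := by exact_mod_cast hx0.ne'
  refine ⟨1, (ε' : ℂ) * M 0 1 / (x : ℂ), (ε' : ℂ), by simp, ?_, ?_, ?_⟩
  · rw [norm_div, norm_mul, hεnorm, one_mul]
    simp [← hxdef, abs_of_pos hx0, div_self hx0.ne']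
  · rcases le_or_gt 0 r with h' | h'
    · left; simp [hεdef, h']
    · right; simp [hεdef, not_le.mpr h']
  · have hε2C : (ε' : ℂ) * (ε' : ℂ) = 1 := by exact_mod_cast hε2
    have hεrC : (ε' : ℂ) * |r| = (r : ℂ) := by exact_mod_cast hεr
    ext i j
    fin_cases i <;> fin_cases j <;>
      simp only [Matrix.smul_apply, Matrix.mul_apply, Fin.sum_univ_two,
        Matrix.conjTranspose_apply, Matrix.diagonal_apply_eq, Matrix.diagonal_apply_ne,
        Matrix.diagonal_apply, Fin.isValue, Matrix.cons_val', Matrix.cons_val_zero,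
        Matrix.cons_val_one, Matrix.head_cons, Matrix.head_fin_const, Matrix.empty_val',
        Matrix.cons_val_fin_one, smul_eq_mul, _root_.map_one, map_div₀, _root_.map_mul,
        Complex.conj_ofReal, if_true, if_false, hcosh, hsinh]
    all_goals norm_num
    · rw [ha]; exact_mod_cast hεr.symm
    · field_simp
      linear_combination (-1 : ℂ) * hε2C
    · rw [hc]; field_simp
      linear_combination (-(starRingEnd ℂ (M 0 1))) * hε2C
    · have hcb : starRingEnd ℂ (M 0 1) * M 0 1 = (x:ℂ)^2 := by
        rw [mul_comm, ← hc]; exact hb2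
      rw [← had, ha]; field_simp
      linear_combination (-((ε':ℂ) * starRingEnd ℂ (M 0 1) * ((|r|:ℝ):ℂ) * M 0 1)) * hε2C
        + (-((r:ℝ):ℂ)) * hcb + (-(starRingEnd ℂ (M 0 1) * M 0 1)) * hεrC
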